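/- Let 1/√2 < α < 1, β = √(1−α²), N ≥ 2, and P_fail = (α²−β²)^{N−1}. The singlet-assemblage fraction of the distilled assemblage equals F_Φ(Σ^dist) = √(1 − ½(α−β)²(α²−β²)^{N−1}). -/

import Mathlib

open Matrix Finset
open scoped ComplexOrder

/-- Positive-semidefinite square root of a matrix (defined as `0` if the matrix
is not positive semidefinite). -/
noncomputable def matSqrt {d : ℕ} (A : Matrix (Fin d) (Fin d) ℂ) :
    Matrix (Fin d) (Fin d) ℂ :=
  open Classical in
  if h : A.PosSemidef then
    (h.1.eigenvectorUnitary : Matrix (Fin d) (Fin d) ℂ) *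
      diagonal ((↑) ∘ (fun x => Real.sqrt x) ∘ h.1.eigenvalues) *
      (star h.1.eigenvectorUnitary : Matrix (Fin d) (Fin d) ℂ)
  else 0

/-- Fidelity between positive semidefinite matrices: `F(A,B) = Tr[√(√A · B · √A)]`. -/
noncomputable def mFid {d : ℕ} (A B : Matrix (Fin d) (Fin d) ℂ) : ℝ :=
  (matSqrt (matSqrt A * B * matSqrt A)).trace.re

/-- The standard basis vector `|0⟩` of `ℂ²`. -/
def e0 : Fin 2 → ℂ := ![1, 0]

/-- The standard basis vector `|1⟩` of `ℂ²`. -/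
def e1 : Fin 2 → ℂ := ![0, 1]

/-- The projector `|0⟩⟨0|`. -/
def P00 : Matrix (Fin 2) (Fin 2) ℂ := vecMulVec e0 (star e0)

/-- The projector `|1⟩⟨1|`. -/
def P11 : Matrix (Fin 2) (Fin 2) ℂ := vecMulVec e1 (star e1)

/-- The Kraus operator `K⁰ = (β/α)|0⟩⟨0| + |1⟩⟨1|` of the successful filter outcome. -/
noncomputable def K0 (α β : ℝ) : Matrix (Fin 2) (Fin 2) ℂ :=
  ((β / α : ℝ) : ℂ) • P00 + P11

/-- The Kraus operator `K¹ = (√(α²−β²)/α)|0⟩⟨0|` of the failed filter outcome. -/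
noncomputable def K1 (α β : ℝ) : Matrix (Fin 2) (Fin 2) ℂ :=
  ((Real.sqrt (α ^ 2 - β ^ 2) / α : ℝ) : ℂ) • P00

/-- Bob's reduced state `ρ_B = α²|0⟩⟨0| + β²|1⟩⟨1|` of the assemblage `Σ^(α)`. -/
noncomputable def ρB (α β : ℝ) : Matrix (Fin 2) (Fin 2) ℂ :=
  ((α ^ 2 : ℝ) : ℂ) • P00 + ((β ^ 2 : ℝ) : ℂ) • P11

/-- The vector `|α₊⟩ = α|0⟩ + β|1⟩`. -/
def ketαp (α β : ℝ) : Fin 2 → ℂ := ![(α : ℂ), (β : ℂ)]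

/-- The vector `|α₋⟩ = α|0⟩ − β|1⟩`. -/
def ketαm (α β : ℝ) : Fin 2 → ℂ := ![(α : ℂ), -(β : ℂ)]

/-- The vector `|+⟩ = (|0⟩+|1⟩)/√2`. -/
noncomputable def ketp : Fin 2 → ℂ :=
  ![(1 / Real.sqrt 2 : ℝ), (1 / Real.sqrt 2 : ℝ)]

/-- The vector `|−⟩ = (|0⟩−|1⟩)/√2`. -/
noncomputable def ketm : Fin 2 → ℂ :=
  ![(1 / Real.sqrt 2 : ℝ), (-(1 / Real.sqrt 2) : ℝ)]

/-- The assemblage `Σ^(α)` with components `σ^(α)_{a|x}` (first index `a`, second `x`):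
`σ^(α)_{0|0} = α²|0⟩⟨0|`, `σ^(α)_{1|0} = β²|1⟩⟨1|`,
`σ^(α)_{0|1} = ½|α₊⟩⟨α₊|`, `σ^(α)_{1|1} = ½|α₋⟩⟨α₋|`. -/
noncomputable def σα (α β : ℝ) (a x : Fin 2) : Matrix (Fin 2) (Fin 2) ℂ :=
  if x = 0 then
    if a = 0 then ((α ^ 2 : ℝ) : ℂ) • P00 else ((β ^ 2 : ℝ) : ℂ) • P11
  else
    if a = 0 then (1 / 2 : ℂ) • vecMulVec (ketαp α β) (star (ketαp α β))
    else (1 / 2 : ℂ) • vecMulVec (ketαm α β) (star (ketαm α β))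

/-- The singlet assemblage `Σ^{Φ⁺}` with components
`σ^{Φ⁺}_{0|0} = ½|0⟩⟨0|`, `σ^{Φ⁺}_{1|0} = ½|1⟩⟨1|`,
`σ^{Φ⁺}_{0|1} = ½|+⟩⟨+|`, `σ^{Φ⁺}_{1|1} = ½|−⟩⟨−|`. -/
noncomputable def σΦ (a x : Fin 2) : Matrix (Fin 2) (Fin 2) ℂ :=
  if x = 0 then
    if a = 0 then (1 / 2 : ℂ) • P00 else (1 / 2 : ℂ) • P11
  else
    if a = 0 then (1 / 2 : ℂ) • vecMulVec ketp (star ketp)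
    else (1 / 2 : ℂ) • vecMulVec ketm (star ketm)

/-- The distilled assemblage `Σ^dist` obtained on average from the `N`-copy protocol,
with `P_fail = (α²−β²)^{N−1}` and `P_success = 1 − P_fail`:
`σ^dist_{0|0} = (½P_success + α²P_fail)|0⟩⟨0|`,
`σ^dist_{1|0} = (½P_success + β²P_fail)|1⟩⟨1|`,
`σ^dist_{0|1} = ½(P_success|+⟩⟨+| + P_fail|α₊⟩⟨α₊|)`,
`σ^dist_{1|1} = ½(P_success|−⟩⟨−| + P_fail|α₋⟩⟨α₋|)`. -/
noncomputable def σdist (α β : ℝ) (N : ℕ) (a x : Fin 2) : Matrix (Fin 2) (Fin 2) ℂ :=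
  let Pfail : ℝ := (α ^ 2 - β ^ 2) ^ (N - 1)
  let Psuccess : ℝ := 1 - Pfail
  if x = 0 then
    if a = 0 then ((1 / 2 * Psuccess + α ^ 2 * Pfail : ℝ) : ℂ) • P00
    else ((1 / 2 * Psuccess + β ^ 2 * Pfail : ℝ) : ℂ) • P11
  else
    if a = 0 then
      (1 / 2 : ℂ) • (((Psuccess : ℝ) : ℂ) • vecMulVec ketp (star ketp) +
        ((Pfail : ℝ) : ℂ) • vecMulVec (ketαp α β) (star (ketαp α β)))
    else
      (1 / 2 : ℂ) • (((Psuccess : ℝ) : ℂ) • vecMulVec ketm (star ketm) +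
        ((Pfail : ℝ) : ℂ) • vecMulVec (ketαm α β) (star (ketαm α β)))

/-- The positive-semidefinite square root given by the spectral decomposition. -/
noncomputable def Matrix.PosSemidef.sqrt {d : ℕ} {A : Matrix (Fin d) (Fin d) ℂ}
    (h : A.PosSemidef) : Matrix (Fin d) (Fin d) ℂ :=
  (h.1.eigenvectorUnitary : Matrix (Fin d) (Fin d) ℂ) *
    diagonal ((↑) ∘ (fun x => Real.sqrt x) ∘ h.1.eigenvalues) *
    (star h.1.eigenvectorUnitary : Matrix (Fin d) (Fin d) ℂ)

open scoped MatrixOrder in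
lemma Matrix.PosSemidef.sqrt_eq_cfc {d : ℕ} {A : Matrix (Fin d) (Fin d) ℂ}
    (hA : A.PosSemidef) : hA.sqrt = CFC.sqrt A := by
  rw [CFC.sqrt_eq_real_sqrt A hA.nonneg, cfcₙ_eq_cfc, hA.1.cfc_eq]
  simp [Matrix.PosSemidef.sqrt, IsHermitian.cfc, Function.comp_def]

open scoped MatrixOrder in
lemma Matrix.PosSemidef.posSemidef_sqrt {d : ℕ} {A : Matrix (Fin d) (Fin d) ℂ}
    (hA : A.PosSemidef) : hA.sqrt.PosSemidef := by
  rw [hA.sqrt_eq_cfc, ← Matrix.nonneg_iff_posSemidef]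
  exact CFC.sqrt_nonneg A

open scoped MatrixOrder in
lemma Matrix.PosSemidef.sqrt_mul_self {d : ℕ} {A : Matrix (Fin d) (Fin d) ℂ}
    (hA : A.PosSemidef) : hA.sqrt * hA.sqrt = A := by
  rw [hA.sqrt_eq_cfc]
  exact CFC.sqrt_mul_sqrt_self A hA.nonneg

open scoped MatrixOrder in
lemma Matrix.PosSemidef.eq_sqrt_of_sq_eq {d : ℕ} {A B : Matrix (Fin d) (Fin d) ℂ}
    (hB : B.PosSemidef) (hA : A.PosSemidef) (h : B ^ 2 = A) : B = hA.sqrt := by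
  rw [hA.sqrt_eq_cfc]
  exact (CFC.sqrt_unique (by rw [← sq]; exact h) hB.nonneg).symm

lemma star_dot_self_nonneg {d : ℕ} (w : Fin d → ℂ) : 0 ≤ star w ⬝ᵥ w := by
  unfold dotProduct
  exact Finset.sum_nonneg fun i _ => by simpa using star_mul_self_nonneg (w i)

lemma star_dot_self_eq_re {d : ℕ} (w : Fin d → ℂ) :
    star w ⬝ᵥ w = (((star w ⬝ᵥ w).re : ℝ) : ℂ) := by
  have h := star_dot_self_nonneg w
  rw [Complex.nonneg_iff] at h
  exact (Complex.ext (by simp) (by simp [← h.2]))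

lemma outerPSD {d : ℕ} (c : ℝ) (hc : 0 ≤ c) (v : Fin d → ℂ) :
    ((c : ℂ) • vecMulVec v (star v)).PosSemidef := by
  refine Matrix.PosSemidef.of_dotProduct_mulVec_nonneg ?_ ?_
  · ext i j
    simp [vecMulVec_apply, conjTranspose_apply, Complex.conj_ofReal, mul_comm]
  · intro x
    have key : (vecMulVec v (star v)) *ᵥ x = (star v ⬝ᵥ x) • v := by
      ext i
      simp [mulVec, vecMulVec_apply, dotProduct, Finset.mul_sum, mul_comm, mul_left_comm]
    rw [smul_mulVec, key, dotProduct_smul, smul_eq_mul, dotProduct_smul, smul_eq_mul]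
    have h1 : star v ⬝ᵥ x = star (star x ⬝ᵥ v) := by rw [star_dotProduct]
    rw [h1]
    have := star_mul_self_nonneg (star x ⬝ᵥ v)
    have h2 : 0 ≤ (star x ⬝ᵥ v) * star (star x ⬝ᵥ v) := mul_star_self_nonneg _
    have h3 : 0 ≤ (c : ℂ) := Complex.zero_le_real.2 hc
    calc (0:ℂ) ≤ (c : ℂ) * ((star x ⬝ᵥ v) * star (star x ⬝ᵥ v)) := mul_nonneg h3 h2
    _ = (c : ℂ) * (star (star x ⬝ᵥ v) * (star x ⬝ᵥ v)) := by ring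

lemma matSqrt_eq {d : ℕ} {A : Matrix (Fin d) (Fin d) ℂ} (hA : A.PosSemidef) :
    matSqrt A = hA.sqrt := dif_pos hA

lemma matSqrt_zero {d : ℕ} : matSqrt (0 : Matrix (Fin d) (Fin d) ℂ) = 0 := by
  rw [matSqrt_eq Matrix.PosSemidef.zero]
  exact (Matrix.PosSemidef.eq_sqrt_of_sq_eq Matrix.PosSemidef.zero Matrix.PosSemidef.zero
    (by simp [pow_two])).symm

lemma outer_mul_outer {d : ℕ} (w : Fin d → ℂ) :
    vecMulVec w (star w) * vecMulVec w (star w) = (star w ⬝ᵥ w) • vecMulVec w (star w) := by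
  ext i j
  simp [Matrix.mul_apply, vecMulVec_apply, dotProduct, Finset.sum_mul, Finset.mul_sum]
  ring_nf
  exact Finset.sum_congr rfl fun k _ => by ring

lemma re_star_dot_self {d : ℕ} (w : Fin d → ℂ) :
    (star w ⬝ᵥ w).re = ∑ i, Complex.normSq (w i) := by
  unfold dotProduct
  rw [Complex.re_sum]
  exact Finset.sum_congr rfl fun i _ => by
    simp [Complex.normSq_apply, Complex.mul_re]

lemma matSqrt_outer {d : ℕ} (μ : ℝ) (hμ : 0 ≤ μ) (w : Fin d → ℂ) :
    matSqrt ((μ : ℂ) • vecMulVec w (star w)) =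
      ((Real.sqrt μ / Real.sqrt ((star w ⬝ᵥ w).re) : ℝ) : ℂ) • vecMulVec w (star w) := by
  set c : ℝ := (star w ⬝ᵥ w).re with hcdef
  have hc : 0 ≤ c := by
    have := star_dot_self_nonneg w
    rw [Complex.nonneg_iff] at this
    exact this.1
  rcases eq_or_lt_of_le hc with hc0 | hcpos
  · -- c = 0 hence w = 0
    have hw : w = 0 := by
      funext i
      have h1 : ∑ i, Complex.normSq (w i) = 0 := by rw [← re_star_dot_self, ← hcdef, ← hc0]
      have h2 : Complex.normSq (w i) = 0 := by
        have := Finset.sum_eq_zero_iff_of_nonneg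
          (fun j _ => Complex.normSq_nonneg (w j)) |>.mp h1 i (Finset.mem_univ i)
        exact this
      simpa using Complex.normSq_eq_zero.mp h2
    subst hw
    have hz : vecMulVec (0 : Fin d → ℂ) (star (0 : Fin d → ℂ)) = 0 := by
      ext i j; simp [vecMulVec_apply]
    rw [hz]
    simp [matSqrt_zero]
  · rcases eq_or_lt_of_le hμ with hμ0 | hμpos
    · rw [← hμ0]
      simp [matSqrt_zero]
    · have hs : 0 ≤ Real.sqrt μ / Real.sqrt c := by positivity
      have hpsd := outerPSD (Real.sqrt μ / Real.sqrt c) hs w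
      have hpsd2 := outerPSD μ hμ w
      rw [matSqrt_eq hpsd2]
      refine (Matrix.PosSemidef.eq_sqrt_of_sq_eq hpsd hpsd2 ?_).symm
      rw [pow_two, Matrix.smul_mul, Matrix.mul_smul, smul_smul, outer_mul_outer,
        star_dot_self_eq_re w, smul_smul, ← hcdef]
      congr 1
      have hr : (Real.sqrt μ / Real.sqrt c) * (Real.sqrt μ / Real.sqrt c) * c = μ := by
        rw [div_mul_div_comm, Real.mul_self_sqrt hμ, Real.mul_self_sqrt hc,
          div_mul_cancel₀ _ hcpos.ne']
      exact_mod_cast hr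

lemma mul_vecMulVec {d : ℕ} (M : Matrix (Fin d) (Fin d) ℂ) (v u : Fin d → ℂ) :
    M * vecMulVec v u = vecMulVec (M *ᵥ v) u := by
  ext i j
  simp only [Matrix.mul_apply, vecMulVec_apply, mulVec, dotProduct, Finset.sum_mul]
  exact Finset.sum_congr rfl fun k _ => by ring

lemma vecMulVec_mul {d : ℕ} (v u : Fin d → ℂ) (M : Matrix (Fin d) (Fin d) ℂ) :
    vecMulVec v u * M = vecMulVec v (u ᵥ* M) := by
  ext i j
  simp only [Matrix.mul_apply, vecMulVec_apply, vecMul, dotProduct, Finset.mul_sum]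
  exact Finset.sum_congr rfl fun k _ => by ring

lemma trace_outer {d : ℕ} (w : Fin d → ℂ) :
    (vecMulVec w (star w)).trace = star w ⬝ᵥ w := by
  simp [Matrix.trace, Matrix.diag, vecMulVec_apply, dotProduct, mul_comm]

lemma mFid_outer {d : ℕ} {A : Matrix (Fin d) (Fin d) ℂ} (hA : A.PosSemidef) (l : ℝ) (hl : 0 ≤ l)
    (v : Fin d → ℂ) :
    mFid A ((l : ℂ) • vecMulVec v (star v)) = Real.sqrt (l * (star v ⬝ᵥ A *ᵥ v).re) := by
  set Q := hA.sqrt with hQdef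
  have hQh : Qᴴ = Q := hA.posSemidef_sqrt.isHermitian
  set w := Q *ᵥ v with hw
  have hsvQ : star v ᵥ* Q = star w := by rw [hw, star_mulVec, hQh]
  have hconj : Q * ((l : ℂ) • vecMulVec v (star v)) * Q = (l : ℂ) • vecMulVec w (star w) := by
    rw [Matrix.mul_smul, Matrix.smul_mul, mul_vecMulVec, vecMulVec_mul, hsvQ, hw]
  have hAv : A *ᵥ v = Q *ᵥ w := by
    rw [hw, Matrix.mulVec_mulVec, hA.sqrt_mul_self]
  have hdot : star v ⬝ᵥ A *ᵥ v = star w ⬝ᵥ w := by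
    rw [hAv, Matrix.dotProduct_mulVec, hsvQ]
  rw [mFid, matSqrt_eq hA, ← hQdef, hconj, matSqrt_outer l hl w, Matrix.trace_smul, trace_outer,
    star_dot_self_eq_re w, hdot]
  set c : ℝ := (star w ⬝ᵥ w).re with hcdef
  have hc : 0 ≤ c := by
    have := star_dot_self_nonneg w
    rw [Complex.nonneg_iff] at this
    exact this.1
  have hre : (((Real.sqrt l / Real.sqrt c : ℝ) : ℂ) • ((c : ℝ) : ℂ)).re
      = Real.sqrt l / Real.sqrt c * c := by
    simp [Complex.ofReal_mul]
  simp only [Complex.ofReal_re] at *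
  rw [hre]
  rcases eq_or_lt_of_le hc with hc0 | hcpos
  · rw [← hc0]
    simp
  · rw [div_mul_eq_mul_div, mul_div_assoc, Real.div_sqrt, ← Real.sqrt_mul hl]

lemma dot_pp (a b α β : ℝ) :
    (star ketp ⬝ᵥ (((a : ℝ) : ℂ) • vecMulVec ketp (star ketp) +
      ((b : ℝ) : ℂ) • vecMulVec (ketαp α β) (star (ketαp α β))) *ᵥ ketp).re
      = a + b * (α + β) ^ 2 / 2 := by
  have h2 : Real.sqrt 2 * Real.sqrt 2 = 2 := Real.mul_self_sqrt (by norm_num)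
  have hs : Real.sqrt 2 ≠ 0 := by positivity
  simp only [ketp, ketαp, dotProduct, mulVec, vecMulVec_apply, Fin.sum_univ_two,
    Matrix.add_apply, Matrix.smul_apply, Pi.star_apply, Matrix.cons_val_zero,
    Matrix.cons_val_one, Matrix.head_cons, Complex.conj_ofReal, smul_eq_mul,
    RCLike.star_def]
  rw [← Complex.ofReal_re (a + b * (α + β) ^ 2 / 2)]
  congr 1
  push_cast
  field_simp
  have h2c : ((Real.sqrt 2 : ℝ) : ℂ) * ((Real.sqrt 2 : ℝ) : ℂ) = 2 := by
    exact_mod_cast congrArg Complex.ofReal h2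
  ring_nf
  linear_combination (-(2 * (a : ℂ) * (2 + ((Real.sqrt 2 : ℝ) : ℂ) ^ 2) +
    (2 * (b : ℂ) * (α : ℂ) * (β : ℂ) + (b : ℂ) * (α : ℂ) ^ 2 + (b : ℂ) * (β : ℂ) ^ 2) *
      ((Real.sqrt 2 : ℝ) : ℂ) ^ 2)) * h2c

lemma dot_mm (a b α β : ℝ) :
    (star ketm ⬝ᵥ (((a : ℝ) : ℂ) • vecMulVec ketm (star ketm) +
      ((b : ℝ) : ℂ) • vecMulVec (ketαm α β) (star (ketαm α β))) *ᵥ ketm).re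
      = a + b * (α + β) ^ 2 / 2 := by
  have h2 : Real.sqrt 2 * Real.sqrt 2 = 2 := Real.mul_self_sqrt (by norm_num)
  have hs : Real.sqrt 2 ≠ 0 := by positivity
  simp only [ketm, ketαm, dotProduct, mulVec, vecMulVec_apply, Fin.sum_univ_two,
    Matrix.add_apply, Matrix.smul_apply, Pi.star_apply, Matrix.cons_val_zero,
    Matrix.cons_val_one, Matrix.head_cons, Complex.conj_ofReal, smul_eq_mul,
    RCLike.star_def, map_neg]
  rw [← Complex.ofReal_re (a + b * (α + β) ^ 2 / 2)]
  congr 1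
  push_cast
  field_simp
  have h2c : ((Real.sqrt 2 : ℝ) : ℂ) * ((Real.sqrt 2 : ℝ) : ℂ) = 2 := by
    exact_mod_cast congrArg Complex.ofReal h2
  ring_nf
  linear_combination (-(2 * (a : ℂ) * (2 + ((Real.sqrt 2 : ℝ) : ℂ) ^ 2) +
    (2 * (b : ℂ) * (α : ℂ) * (β : ℂ) + (b : ℂ) * (α : ℂ) ^ 2 + (b : ℂ) * (β : ℂ) ^ 2) *
      ((Real.sqrt 2 : ℝ) : ℂ) ^ 2)) * h2c

set_option maxHeartbeats 1000000 in
/-- The singlet-assemblage fraction of the distilled assemblage,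
`F_Φ(Σ^dist) = min_{x∈{0,1}} Σ_a F(σ^dist_{a|x}, σ^{Φ⁺}_{a|x})`, equals
`√(1 − ½(α−β)²(α²−β²)^{N−1})`. -/
theorem singlet_fraction_distilled (α β : ℝ) (hα2 : 1 / Real.sqrt 2 < α) (hα : α < 1)
    (hβ : β = Real.sqrt (1 - α ^ 2)) (N : ℕ) (hN : 2 ≤ N) :
    min (∑ a, mFid (σdist α β N a 0) (σΦ a 0))
        (∑ a, mFid (σdist α β N a 1) (σΦ a 1)) =
      Real.sqrt (1 - 1 / 2 * (α - β) ^ 2 * (α ^ 2 - β ^ 2) ^ (N - 1)) := by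
  have hs2 : Real.sqrt 2 * Real.sqrt 2 = 2 := Real.mul_self_sqrt (by norm_num)
  have hs2pos : 0 < Real.sqrt 2 := Real.sqrt_pos.mpr (by norm_num)
  have hα0 : 0 < α := lt_trans (by positivity) hα2
  have hαsq : 1 / 2 < α ^ 2 := by
    have h := pow_lt_pow_left₀ hα2 (by positivity) (two_ne_zero)
    calc (1:ℝ)/2 = (1 / Real.sqrt 2) ^ 2 := by
          rw [div_pow, one_pow, sq, hs2]
    _ < α ^ 2 := h
  have hα1 : α ^ 2 < 1 := by nlinarith
  have hβ2 : β ^ 2 = 1 - α ^ 2 := by rw [hβ]; exact Real.sq_sqrt (by linarith)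
  have hβ0 : 0 ≤ β := hβ ▸ Real.sqrt_nonneg _
  have hb0 : 0 ≤ α ^ 2 - β ^ 2 := by rw [hβ2]; linarith
  have hb1 : α ^ 2 - β ^ 2 ≤ 1 := by nlinarith [sq_nonneg β]
  set Pf : ℝ := (α ^ 2 - β ^ 2) ^ (N - 1) with hPf
  have hP0 : 0 ≤ Pf := pow_nonneg hb0 _
  have hP1 : Pf ≤ 1 := pow_le_one₀ hb0 hb1
  have hS0 : 0 ≤ 1 - Pf := by linarith
  have hc0 : 0 ≤ 1 / 2 * (1 - Pf) + α ^ 2 * Pf := by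
    nlinarith [mul_nonneg (sq_nonneg α) hP0]
  have hc1 : 0 ≤ 1 / 2 * (1 - Pf) + β ^ 2 * Pf := by
    nlinarith [mul_nonneg (sq_nonneg β) hP0]
  have hr0 : 0 ≤ (1 - Pf) / 2 + Pf / 2 * (α + β) ^ 2 / 2 := by
    nlinarith [mul_nonneg hP0 (sq_nonneg (α + β))]
  set c0 : ℝ := 1 / 2 * (1 - Pf) + α ^ 2 * Pf with hc0def
  set c1 : ℝ := 1 / 2 * (1 - Pf) + β ^ 2 * Pf with hc1def
  set r : ℝ := (1 - Pf) / 2 + Pf / 2 * (α + β) ^ 2 / 2 with hrdef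
  clear_value c0 c1 r
  -- rewrite assemblage components
  have e00 : σdist α β N 0 0 = ((c0 : ℝ) : ℂ) • vecMulVec e0 (star e0) := by
    simp [σdist, P00, hc0def, hPf]
  have e10 : σdist α β N 1 0 = ((c1 : ℝ) : ℂ) • vecMulVec e1 (star e1) := by
    simp [σdist, P11, hc1def, hPf]
  have e01 : σdist α β N 0 1 = (((1 - Pf) / 2 : ℝ) : ℂ) • vecMulVec ketp (star ketp) +
      ((Pf / 2 : ℝ) : ℂ) • vecMulVec (ketαp α β) (star (ketαp α β)) := by
    simp [σdist, smul_add, smul_smul, hPf]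
    congr 1 <;> (congr 1; push_cast; ring)
  have e11 : σdist α β N 1 1 = (((1 - Pf) / 2 : ℝ) : ℂ) • vecMulVec ketm (star ketm) +
      ((Pf / 2 : ℝ) : ℂ) • vecMulVec (ketαm α β) (star (ketαm α β)) := by
    simp [σdist, smul_add, smul_smul, hPf]
    congr 1 <;> (congr 1; push_cast; ring)
  have f00 : σΦ 0 0 = ((1 / 2 : ℝ) : ℂ) • vecMulVec e0 (star e0) := by norm_num [σΦ, P00]
  have f10 : σΦ 1 0 = ((1 / 2 : ℝ) : ℂ) • vecMulVec e1 (star e1) := by norm_num [σΦ, P11]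
  have f01 : σΦ 0 1 = ((1 / 2 : ℝ) : ℂ) • vecMulVec ketp (star ketp) := by norm_num [σΦ]
  have f11 : σΦ 1 1 = ((1 / 2 : ℝ) : ℂ) • vecMulVec ketm (star ketm) := by norm_num [σΦ]
  -- fidelity values
  have h00 : mFid (σdist α β N 0 0) (σΦ 0 0) = Real.sqrt (1 / 2 * c0) := by
    rw [e00, f00, mFid_outer (outerPSD c0 hc0 e0) (1 / 2) (by norm_num) e0]
    congr 1
    congr 1
    simp [e0, dotProduct, mulVec, vecMulVec_apply, Fin.sum_univ_two, -vecMulVec_cons,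
      -cons_vecMulVec]
  have h10 : mFid (σdist α β N 1 0) (σΦ 1 0) = Real.sqrt (1 / 2 * c1) := by
    rw [e10, f10, mFid_outer (outerPSD c1 hc1 e1) (1 / 2) (by norm_num) e1]
    congr 1
    congr 1
    simp [e1, dotProduct, mulVec, vecMulVec_apply, Fin.sum_univ_two, -vecMulVec_cons,
      -cons_vecMulVec]
  have h01 : mFid (σdist α β N 0 1) (σΦ 0 1) = Real.sqrt (1 / 2 * r) := by
    rw [e01, f01, mFid_outer ((outerPSD ((1 - Pf) / 2) (by linarith) ketp).add
      (outerPSD (Pf / 2) (by linarith) (ketαp α β))) (1 / 2) (by norm_num) ketp]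
    congr 1
    congr 1
    rw [dot_pp ((1 - Pf) / 2) (Pf / 2) α β, hrdef]
  have h11 : mFid (σdist α β N 1 1) (σΦ 1 1) = Real.sqrt (1 / 2 * r) := by
    rw [e11, f11, mFid_outer ((outerPSD ((1 - Pf) / 2) (by linarith) ketm).add
      (outerPSD (Pf / 2) (by linarith) (ketαm α β))) (1 / 2) (by norm_num) ketm]
    congr 1
    congr 1
    rw [dot_mm ((1 - Pf) / 2) (Pf / 2) α β, hrdef]
  rw [Fin.sum_univ_two, Fin.sum_univ_two, h00, h10, h01, h11]
  set z : ℝ := 1 - 1 / 2 * (α - β) ^ 2 * Pf with hzdef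
  clear_value z
  -- Sum for x = 1 equals √z
  have hd1 : (α - β) ^ 2 ≤ 1 := by nlinarith [mul_nonneg hα0.le hβ0]
  have hzhalf : 1 / 2 ≤ z := by
    rw [hzdef]
    nlinarith [mul_nonneg hS0 (sq_nonneg (α - β)), mul_nonneg hP0 (sq_nonneg (α - β))]
  have hz0 : 0 ≤ z := by linarith
  have hsum1 : Real.sqrt (1 / 2 * r) + Real.sqrt (1 / 2 * r) = Real.sqrt z := by
    have h4 : (4 : ℝ) * (1 / 2 * r) = z := by
      rw [hrdef, hzdef]
      linear_combination Pf * hβ2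
    have hsqrt4 : Real.sqrt 4 = 2 := by
      rw [show (4 : ℝ) = 2 ^ 2 by norm_num, Real.sqrt_sq (by norm_num)]
    calc Real.sqrt (1 / 2 * r) + Real.sqrt (1 / 2 * r) = 2 * Real.sqrt (1 / 2 * r) := by ring
    _ = Real.sqrt 4 * Real.sqrt (1 / 2 * r) := by rw [hsqrt4]
    _ = Real.sqrt (4 * (1 / 2 * r)) := (Real.sqrt_mul (by norm_num) _).symm
    _ = Real.sqrt z := by rw [h4]
  -- min is attained at x = 1
  have hmin : Real.sqrt z ≤ Real.sqrt (1 / 2 * c0) + Real.sqrt (1 / 2 * c1) := by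
    set x : ℝ := 1 / 2 * c0 with hxdef
    set y : ℝ := 1 / 2 * c1 with hydef
    have hx0 : 0 ≤ x := by positivity
    have hy0 : 0 ≤ y := by positivity
    have hxy : x + y = 1 / 2 := by
      rw [hxdef, hydef, hc0def, hc1def]
      linear_combination Pf / 2 * hβ2
    have ha0 : 0 ≤ (z - 1 / 2) / 2 := by linarith
    have hprod : 0 ≤ Pf * (1 - Pf) * (α - β) ^ 2 / 8 :=
      div_nonneg (mul_nonneg (mul_nonneg hP0 hS0) (sq_nonneg _)) (by norm_num)
    have hdiff : 1 / 2 * c0 * (1 / 2 * c1) - ((z - 1 / 2) / 2) ^ 2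
        = Pf * (1 - Pf) * (α - β) ^ 2 / 8 := by
      rw [hc0def, hc1def, hzdef]
      linear_combination (Pf / 8 + Pf ^ 2 * (α ^ 2 + β ^ 2 - 1) / 16
        - (α - β) ^ 2 * Pf ^ 2 / 8) * hβ2
    have hsq : ((z - 1 / 2) / 2) ^ 2 ≤ x * y := by
      rw [hxdef, hydef]
      linarith [hdiff, hprod]
    have h3 : (z - 1 / 2) / 2 ≤ Real.sqrt (x * y) :=
      (Real.le_sqrt ha0 (mul_nonneg hx0 hy0)).mpr hsq
    have h4 : Real.sqrt (x * y) = Real.sqrt x * Real.sqrt y := Real.sqrt_mul hx0 y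
    have hexp : (Real.sqrt x + Real.sqrt y) ^ 2 = x + y + 2 * (Real.sqrt x * Real.sqrt y) := by
      rw [add_sq, Real.sq_sqrt hx0, Real.sq_sqrt hy0]
      ring
    have hkey : z ≤ (Real.sqrt x + Real.sqrt y) ^ 2 := by
      rw [hexp, ← h4]
      linarith
    calc Real.sqrt z ≤ Real.sqrt ((Real.sqrt x + Real.sqrt y) ^ 2) := Real.sqrt_le_sqrt hkey
    _ = Real.sqrt x + Real.sqrt y := Real.sqrt_sq (by positivity)
  rw [hsum1]
  exact min_eq_right hmin
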